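/- Let n ≥ 1 and d ≥ 1 be integers and let j : Fin n → ℕ satisfy Σ_k j(k) = d. Then the supremum of ∏_{k} |x_k|^{2·j(k)} over all x ∈ ℂⁿ with Σ_k |x_k|² = 1 equals (∏_k j(k)^{j(k)}) / d^d (with the convention 0^0 = 1), and this supremum is attained (namely at any x with |x_k|² = j(k)/d for all k). -/

import Mathlib

open Finset

lemma val_eq (n d : ℕ) (hd : 1 ≤ d) (j : Fin n → ℕ) (hj : ∑ k, j k = d) :
    ∏ k, ((j k : ℝ) / d) ^ (j k) = (∏ k, (j k : ℝ) ^ (j k)) / (d : ℝ) ^ d := by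
  simp_rw [div_pow]
  rw [Finset.prod_div_distrib, Finset.prod_pow_eq_pow_sum, hj]

lemma key (n d : ℕ) (hd : 1 ≤ d) (j : Fin n → ℕ) (hj : ∑ k, j k = d)
    (a : Fin n → ℝ) (ha : ∀ k, 0 ≤ a k) (hsum : ∑ k, a k = 1) :
    ∏ k, a k ^ j k ≤ ∏ k, ((j k : ℝ) / d) ^ j k := by
  have hd0 : (d : ℝ) ≠ 0 := by positivity
  set w : Fin n → ℝ := fun k => (j k : ℝ) / d with hw_def
  set z : Fin n → ℝ := fun k => if j k = 0 then 1 else a k * d / j k with hz_def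
  have hz0 : ∀ k, 0 ≤ z k := by
    intro k; simp only [hz_def]
    split
    · norm_num
    · exact div_nonneg (mul_nonneg (ha k) (by positivity)) (by positivity)
  have hw1 : ∑ k, w k = 1 := by
    simp only [hw_def, ← Finset.sum_div]
    rw [← Nat.cast_sum, hj, div_self hd0]
  have hAM := Real.geom_mean_le_arith_mean_weighted Finset.univ w z
    (fun k _ => by positivity) hw1 (fun k _ => hz0 k)
  have hrhs : ∑ k, w k * z k ≤ 1 := by
    rw [← hsum]
    refine Finset.sum_le_sum fun k _ => ?_
    simp only [hw_def, hz_def]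
    by_cases h : j k = 0
    · simp [h, ha k]
    · rw [if_neg h]
      have hjk : (j k : ℝ) ≠ 0 := Nat.cast_ne_zero.2 h
      have : (j k : ℝ) / ↑d * (a k * ↑d / ↑(j k)) = a k := by
        field_simp
      rw [this]
  have hP1 : ∏ k, z k ^ (w k : ℝ) ≤ 1 := hAM.trans hrhs
  have hP0 : 0 ≤ ∏ k, z k ^ (w k : ℝ) :=
    Finset.prod_nonneg fun k _ => Real.rpow_nonneg (hz0 k) _
  have hpow : (∏ k, z k ^ (w k : ℝ)) ^ d ≤ 1 := pow_le_one₀ hP0 hP1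
  have hpowEq : (∏ k, z k ^ (w k : ℝ)) ^ d = ∏ k, z k ^ j k := by
    rw [← Finset.prod_pow]
    refine Finset.prod_congr rfl fun k _ => ?_
    rw [← Real.rpow_natCast (z k ^ (w k : ℝ)) d, ← Real.rpow_mul (hz0 k)]
    have : w k * d = (j k : ℝ) := by
      simp only [hw_def]; field_simp
    rw [this, Real.rpow_natCast]
  rw [hpowEq] at hpow
  -- ∏ z^j = (∏ a^j) * ∏ c^j with c = d/j
  have hfact : ∏ k, z k ^ j k = (∏ k, a k ^ j k) * ∏ k, (if j k = 0 then (1:ℝ) else (d : ℝ) / j k) ^ j k := by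
    rw [← Finset.prod_mul_distrib]
    refine Finset.prod_congr rfl fun k _ => ?_
    by_cases h : j k = 0
    · simp [h, hz_def]
    · simp only [hz_def, if_neg h]
      rw [← mul_pow]
      congr 1
      field_simp
  have hCpos : 0 < ∏ k, (if j k = 0 then (1:ℝ) else (d : ℝ) / j k) ^ j k := by
    refine Finset.prod_pos fun k _ => ?_
    by_cases h : j k = 0
    · simp [h]
    · rw [if_neg h]
      have : (0:ℝ) < (j k : ℝ) := by exact_mod_cast Nat.pos_of_ne_zero h
      positivity
  rw [hfact] at hpow
  have hle : ∏ k, a k ^ j k ≤ (∏ k, (if j k = 0 then (1:ℝ) else (d : ℝ) / j k) ^ j k)⁻¹ := by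
    rw [inv_eq_one_div, le_div_iff₀ hCpos]
    exact hpow
  refine hle.trans_eq ?_
  rw [← Finset.prod_inv_distrib]
  refine Finset.prod_congr rfl fun k _ => ?_
  by_cases h : j k = 0
  · simp [h]
  · rw [if_neg h, ← inv_pow, inv_div]

/-- The supremum of ∏_k |x_k|^(2 j_k) over the unit sphere of ℂⁿ equals
(∏_k j_k^{j_k}) / d^d, and it is attained at any x with |x_k|² = j_k/d. -/
theorem stmt_0 (n d : ℕ) (hn : 1 ≤ n) (hd : 1 ≤ d) (j : Fin n → ℕ)
    (hj : ∑ k, j k = d) :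
    IsGreatest {r : ℝ | ∃ x : Fin n → ℂ, (∑ k, ‖x k‖ ^ 2) = 1 ∧
        r = ∏ k, ‖x k‖ ^ (2 * j k)}
      ((∏ k, (j k : ℝ) ^ (j k)) / (d : ℝ) ^ d) ∧
    ∀ x : Fin n → ℂ, (∀ k, ‖x k‖ ^ 2 = (j k : ℝ) / d) →
      (∏ k, ‖x k‖ ^ (2 * j k)) = (∏ k, (j k : ℝ) ^ (j k)) / (d : ℝ) ^ d := by
  have hd0 : (d : ℝ) ≠ 0 := by positivity
  have hval := val_eq n d hd j hj
  have part2 : ∀ x : Fin n → ℂ, (∀ k, ‖x k‖ ^ 2 = (j k : ℝ) / d) →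
      (∏ k, ‖x k‖ ^ (2 * j k)) = (∏ k, (j k : ℝ) ^ (j k)) / (d : ℝ) ^ d := by
    intro x hx
    calc ∏ k, ‖x k‖ ^ (2 * j k)
        = ∏ k, (‖x k‖ ^ 2) ^ j k :=
          Finset.prod_congr rfl fun k _ => by rw [pow_mul]
      _ = ∏ k, ((j k : ℝ) / d) ^ j k :=
          Finset.prod_congr rfl fun k _ => by rw [hx k]
      _ = _ := hval
  refine ⟨⟨?_, ?_⟩, part2⟩
  · refine ⟨fun k => (Real.sqrt ((j k : ℝ) / d) : ℂ), ?_, ?_⟩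
    · have habs : ∀ k, ‖((Real.sqrt ((j k : ℝ) / d) : ℂ))‖ ^ 2 = (j k : ℝ) / d := by
        intro k
        rw [Complex.norm_real, Real.norm_eq_abs, abs_of_nonneg (Real.sqrt_nonneg _),
          Real.sq_sqrt (by positivity)]
      calc ∑ k, ‖((Real.sqrt ((j k : ℝ) / d) : ℂ))‖ ^ 2
          = ∑ k, (j k : ℝ) / d := Finset.sum_congr rfl fun k _ => habs k
        _ = 1 := by rw [← Finset.sum_div, ← Nat.cast_sum, hj, div_self hd0]
    · refine (part2 _ fun k => ?_).symm
      rw [Complex.norm_real, Real.norm_eq_abs, abs_of_nonneg (Real.sqrt_nonneg _),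
        Real.sq_sqrt (by positivity)]
  · rintro r ⟨x, hx1, rfl⟩
    have hk := key n d hd j hj (fun k => ‖x k‖ ^ 2)
      (fun k => by positivity) hx1
    rw [← hval]
    calc ∏ k, ‖x k‖ ^ (2 * j k)
        = ∏ k, (‖x k‖ ^ 2) ^ j k :=
          Finset.prod_congr rfl fun k _ => by rw [pow_mul]
      _ ≤ _ := hk
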